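/- For λ ∈ ℂ with λ ≠ ±2 and T_n(λ) = 2 (where n ≥ 1), one has S_{n-1}(λ) = 0 and S_{n-2}(λ) = -1. -/

import Mathlib

private lemma uniq_rec (lam : ℂ) (S g : ℤ → ℂ) (h0 : S 0 = g 0) (h1 : S 1 = g 1)
    (hS : ∀ i : ℤ, S (i + 1) = lam * S i - S (i - 1))
    (hg : ∀ i : ℤ, g (i + 1) = lam * g i - g (i - 1)) : ∀ i : ℤ, S i = g i := by
  have key : ∀ i : ℤ, S i = g i ∧ S (i + 1) = g (i + 1) := by
    intro i
    induction i using Int.induction_on with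
    | zero => exact ⟨h0, h1⟩
    | succ k ih =>
      refine ⟨ih.2, ?_⟩
      have e1 := hS (k + 1)
      have e2 := hg (k + 1)
      have e : ((k : ℤ) + 1) - 1 = k := by ring
      rw [e] at e1 e2
      rw [e1, e2, ih.1, ih.2]
    | pred k ih =>
      refine ⟨?_, by simpa using ih.1⟩
      have e1 := hS (-k)
      have e2 := hg (-k)
      have e : (-(k : ℤ)) - 1 = -k - 1 := by ring
      rw [e] at e1 e2
      have hskey : S (-k - 1) = lam * S (-k) - S (-k + 1) := by
        rw [e1]; ring
      rw [hskey, ih.1, ih.2, e2]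
      ring
  exact fun i => (key i).1

theorem stmt16 (lam : ℂ) (hlam2 : lam ≠ 2) (hlamm2 : lam ≠ -2)
    (S T : ℤ → ℂ) (hS0 : S 0 = 1) (hS1 : S 1 = lam)
    (hSrec : ∀ i : ℤ, S (i + 1) = lam * S i - S (i - 1))
    (hT0 : T 0 = 2) (hT1 : T 1 = lam)
    (hTrec : ∀ i : ℤ, T (i + 1) = lam * T i - T (i - 1))
    (n : ℤ) (hn : 1 ≤ n) (h : T n = 2) :
    S (n - 1) = 0 ∧ S (n - 2) = -1 := by
  obtain ⟨s, hs⟩ := IsAlgClosed.exists_pow_nat_eq (k := ℂ) (lam ^ 2 - 4) (n := 2) (by norm_num)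
  have hs0 : s ≠ 0 := by
    intro h0
    rw [h0] at hs
    have : (lam - 2) * (lam + 2) = 0 := by linear_combination -hs
    rcases mul_eq_zero.1 this with h' | h'
    · exact hlam2 (by linear_combination h')
    · exact hlamm2 (by linear_combination h')
  obtain ⟨μ, ν, hprod, hsum, hdiff⟩ : ∃ μ ν : ℂ, μ * ν = 1 ∧ μ + ν = lam ∧ μ - ν = s :=
    ⟨(lam + s) / 2, (lam - s) / 2, by field_simp; linear_combination -hs, by ring, by ring⟩
  have hμ0 : μ ≠ 0 := left_ne_zero_of_mul_eq_one hprod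
  have hν0 : ν ≠ 0 := right_ne_zero_of_mul_eq_one hprod
  have hSform : ∀ i : ℤ, S i = (μ ^ (i + 1) - ν ^ (i + 1)) / s := by
    apply uniq_rec lam S (fun i => (μ ^ (i + 1) - ν ^ (i + 1)) / s)
    · have e1 : μ ^ ((0 : ℤ) + 1) = μ := by norm_num
      have e2 : ν ^ ((0 : ℤ) + 1) = ν := by norm_num
      rw [hS0, e1, e2, hdiff, div_self hs0]
    · have e1 : μ ^ ((1 : ℤ) + 1) = μ * μ := by
        rw [show (1 : ℤ) + 1 = 0 + 1 + 1 by ring, zpow_add_one₀ hμ0, zpow_add_one₀ hμ0]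
        norm_num
      have e2 : ν ^ ((1 : ℤ) + 1) = ν * ν := by
        rw [show (1 : ℤ) + 1 = 0 + 1 + 1 by ring, zpow_add_one₀ hν0, zpow_add_one₀ hν0]
        norm_num
      rw [hS1, e1, e2, eq_div_iff hs0]
      linear_combination (-(μ + ν)) * hdiff - s * hsum
    · exact hSrec
    · intro i
      have e1 : μ ^ (i + 1 + 1) = μ ^ i * μ * μ := by
        rw [zpow_add_one₀ hμ0, zpow_add_one₀ hμ0]
      have e2 : ν ^ (i + 1 + 1) = ν ^ i * ν * ν := by
        rw [zpow_add_one₀ hν0, zpow_add_one₀ hν0]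
      have e3 : μ ^ (i + 1) = μ ^ i * μ := zpow_add_one₀ hμ0 i
      have e4 : ν ^ (i + 1) = ν ^ i * ν := zpow_add_one₀ hν0 i
      have e5 : μ ^ (i - 1 + 1) = μ ^ i := by congr 1; ring
      have e6 : ν ^ (i - 1 + 1) = ν ^ i := by congr 1; ring
      rw [e1, e2, e3, e4, e5, e6]
      have num : μ ^ i * μ * μ - ν ^ i * ν * ν
          = lam * (μ ^ i * μ - ν ^ i * ν) - (μ ^ i - ν ^ i) := by
        rw [← hsum]
        linear_combination (ν ^ i - μ ^ i) * hprod
      rw [num]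
      ring
  have hTform : ∀ i : ℤ, T i = μ ^ i + ν ^ i := by
    apply uniq_rec lam T (fun i => μ ^ i + ν ^ i)
    · rw [hT0]; norm_num
    · rw [hT1, zpow_one, zpow_one, hsum]
    · exact hTrec
    · intro i
      have e1 : μ ^ (i + 1) = μ ^ (i - 1) * μ * μ := by
        rw [show i + 1 = i - 1 + 1 + 1 by ring, zpow_add_one₀ hμ0, zpow_add_one₀ hμ0]
      have e2 : ν ^ (i + 1) = ν ^ (i - 1) * ν * ν := by
        rw [show i + 1 = i - 1 + 1 + 1 by ring, zpow_add_one₀ hν0, zpow_add_one₀ hν0]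
      have e3 : μ ^ i = μ ^ (i - 1) * μ := by
        rw [show i = i - 1 + 1 by ring, zpow_add_one₀ hμ0]; ring_nf
      have e4 : ν ^ i = ν ^ (i - 1) * ν := by
        rw [show i = i - 1 + 1 by ring, zpow_add_one₀ hν0]; ring_nf
      rw [e1, e2, e3, e4, ← hsum]
      linear_combination (-(μ ^ (i - 1) + ν ^ (i - 1))) * hprod
  have hνinv : ν = μ⁻¹ := (inv_eq_of_mul_eq_one_right hprod).symm
  have hμinv : μ = ν⁻¹ := (inv_eq_of_mul_eq_one_left hprod).symm
  have hTn : μ ^ n + ν ^ n = 2 := by rw [← hTform n, h]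
  have hμn0 : μ ^ n ≠ 0 := zpow_ne_zero n hμ0
  have hμn1 : μ ^ n = 1 := by
    have hh : ν ^ n = (μ ^ n)⁻¹ := by rw [hνinv, inv_zpow]
    rw [hh] at hTn
    have sq0 : (μ ^ n - 1) ^ 2 = 0 := by
      field_simp at hTn
      linear_combination hTn
    have := pow_eq_zero_iff (n := 2) (by norm_num) |>.1 sq0
    exact sub_eq_zero.mp this
  have hνn1 : ν ^ n = 1 := by
    rw [hνinv, inv_zpow, hμn1, inv_one]
  constructor
  · rw [hSform (n - 1), show n - 1 + 1 = n by ring, hμn1, hνn1]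
    simp
  · rw [hSform (n - 2), show n - 2 + 1 = n - 1 by ring]
    have a1 : μ ^ (n - 1) = ν := by
      rw [show n - 1 = n + (-1) by ring, zpow_add₀ hμ0, hμn1, one_mul, zpow_neg, zpow_one,
        ← hνinv]
    have a2 : ν ^ (n - 1) = μ := by
      rw [show n - 1 = n + (-1) by ring, zpow_add₀ hν0, hνn1, one_mul, zpow_neg, zpow_one,
        ← hμinv]
    rw [a1, a2, div_eq_iff hs0]
    linear_combination -hdiff
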